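/- Let A, B be symmetric positive definite n×n real matrices and L the unique symmetric positive definite matrix with L²AL² = B. Let M(q,p) = (Bp, Aq) be the linear vector field of the system q̇ = Bp, ṗ = Aq. Then the subspaces E⁻ = {(q, −L⁻²q) : q ∈ ℝⁿ} and E⁺ = {(q, L⁻²q) : q ∈ ℝⁿ} are invariant under M (M maps each subspace into itself), and E⁻ is the stable space and E⁺ the unstable space of the flow: for every v ∈ E⁻ one has exp(tM)v → 0 as t → +∞, and for every v ∈ E⁺ one has exp(tM)v → 0 as t → −∞. -/

import Mathlib

open Matrix Filter

section Aux

variable {N ν : Type*} [Fintype N] [DecidableEq N] [Fintype ν] [DecidableEq ν]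

lemma exp_intertwine_aux (X : Matrix N N ℝ) (K : Matrix N ν ℝ) (Y : Matrix ν ν ℝ)
    (h : X * K = K * Y) :
    NormedSpace.exp X * K = K * NormedSpace.exp Y := by
  letI : SeminormedRing (Matrix N N ℝ) := Matrix.linftyOpSemiNormedRing
  letI : NormedRing (Matrix N N ℝ) := Matrix.linftyOpNormedRing
  letI : NormedAlgebra ℝ (Matrix N N ℝ) := Matrix.linftyOpNormedAlgebra
  letI : SeminormedRing (Matrix ν ν ℝ) := Matrix.linftyOpSemiNormedRing
  letI : NormedRing (Matrix ν ν ℝ) := Matrix.linftyOpNormedRing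
  letI : NormedAlgebra ℝ (Matrix ν ν ℝ) := Matrix.linftyOpNormedAlgebra
  have hpow : ∀ k : ℕ, X ^ k * K = K * Y ^ k := by
    intro k
    induction k with
    | zero => simp
    | succ k ih => rw [pow_succ', pow_succ', Matrix.mul_assoc, ih, ← Matrix.mul_assoc, h, Matrix.mul_assoc]
  have hsX : Summable fun k : ℕ => (k.factorial⁻¹ : ℝ) • X ^ k :=
    NormedSpace.expSeries_summable' X
  have hsY : Summable fun k : ℕ => (k.factorial⁻¹ : ℝ) • Y ^ k :=
    NormedSpace.expSeries_summable' Y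
  have hfc : Continuous fun Z : Matrix N N ℝ => Z * K :=
    continuous_id.matrix_mul continuous_const
  have hgc : Continuous fun Z : Matrix ν ν ℝ => K * Z :=
    continuous_const.matrix_mul continuous_id
  let f : Matrix N N ℝ →L[ℝ] Matrix N ν ℝ :=
    ⟨{ toFun := fun Z => Z * K, map_add' := fun a b => Matrix.add_mul a b K,
       map_smul' := fun c a => Matrix.smul_mul c a K }, hfc⟩
  let g : Matrix ν ν ℝ →L[ℝ] Matrix N ν ℝ :=
    ⟨{ toFun := fun Z => K * Z, map_add' := fun a b => Matrix.mul_add K a b,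
       map_smul' := fun c a => Matrix.mul_smul K c a }, hgc⟩
  calc NormedSpace.exp X * K = f (∑' k : ℕ, (k.factorial⁻¹ : ℝ) • X ^ k) := by
        rw [NormedSpace.exp_eq_tsum (𝕂 := ℝ)]; rfl
    _ = ∑' k : ℕ, (k.factorial⁻¹ : ℝ) • (X ^ k * K) := by
        rw [f.map_tsum hsX]
        simp [f, Matrix.smul_mul]
    _ = ∑' k : ℕ, (k.factorial⁻¹ : ℝ) • (K * Y ^ k) := by
        simp_rw [hpow]
    _ = g (∑' k : ℕ, (k.factorial⁻¹ : ℝ) • Y ^ k) := by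
        rw [g.map_tsum hsY]
        simp [g, Matrix.mul_smul]
    _ = K * NormedSpace.exp Y := by rw [NormedSpace.exp_eq_tsum (𝕂 := ℝ)]; rfl

lemma tendsto_exp_smul_posDef_atBot (P : Matrix ν ν ℝ) (hP : P.PosDef) :
    Tendsto (fun s : ℝ => NormedSpace.exp (s • P)) atBot (nhds 0) := by
  have hH := hP.isHermitian
  set U : Matrix ν ν ℝ := (hH.eigenvectorUnitary : Matrix ν ν ℝ) with hU
  have hUU : U * star U = 1 :=
    (Matrix.mem_unitaryGroup_iff).mp hH.eigenvectorUnitary.2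
  have hUinv : U⁻¹ = star U := Matrix.inv_eq_right_inv hUU
  have hUnit : IsUnit U := (Matrix.isUnit_iff_isUnit_det U).mpr
    (IsUnit.of_mul_eq_one (star U).det (by rw [← Matrix.det_mul, hUU, Matrix.det_one]))
  have hspec : P = U * Matrix.diagonal hH.eigenvalues * U⁻¹ := by
    rw [hUinv]
    have := hH.spectral_theorem
    simpa using this
  have key : ∀ s : ℝ, NormedSpace.exp (s • P)
      = U * Matrix.diagonal (fun i => Real.exp (s * hH.eigenvalues i)) * star U := by
    intro s
    have h1 : s • P = U * Matrix.diagonal (fun i => s * hH.eigenvalues i) * U⁻¹ := by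
      conv_lhs => rw [hspec]
      rw [show (fun i => s * hH.eigenvalues i) = s • hH.eigenvalues from funext fun i => rfl,
        Matrix.diagonal_smul, mul_smul_comm, smul_mul_assoc]
    rw [h1, Matrix.exp_conj U _ hUnit, Matrix.exp_diagonal, ← hUinv]
    congr 2
    rw [Pi.exp_def]
    funext i
    rw [← Real.exp_eq_exp_ℝ]
  simp_rw [key]
  have hcont : Continuous fun d : ν → ℝ => U * Matrix.diagonal d * star U :=
    (continuous_const.matrix_mul (continuous_id.matrix_diagonal)).matrix_mul continuous_const
  have hd : Tendsto (fun s : ℝ => fun i => Real.exp (s * hH.eigenvalues i)) atBot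
      (nhds (0 : ν → ℝ)) := by
    rw [tendsto_pi_nhds]
    intro i
    exact Real.tendsto_exp_atBot.comp (tendsto_id.atBot_mul_const (hP.eigenvalues_pos i))
  have := (hcont.tendsto 0).comp hd
  have h0 : U * Matrix.diagonal (0 : ν → ℝ) * star U = 0 := by
    ext i j
    simp [Matrix.mul_apply, Matrix.diagonal_apply]
  rw [h0] at this
  exact this

end Aux

lemma posDef_conj_aux {ν : Type*} [Fintype ν] [DecidableEq ν] {A L : Matrix ν ν ℝ}
    (hA : A.PosDef) (hL : L.PosDef) : (L * A * L).PosDef := by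
  have hLH : Lᴴ = L := hL.isHermitian
  have h := hA.conjTranspose_mul_mul_same (B := L)
    (Matrix.mulVec_injective_of_isUnit hL.isUnit)
  rwa [hLH] at h


/-- for the linear system `q̇ = Bp, ṗ = Aq` (matrix
`M = fromBlocks 0 B A 0` on ℝⁿ×ℝⁿ ≅ (Fin n ⊕ Fin n) → ℝ), the subspaces
`E⁻ = {(q, −L⁻²q)}` and `E⁺ = {(q, L⁻²q)}` are invariant, `E⁻` being the stable space
(`exp(tM)v → 0` as `t → +∞`) and `E⁺` the unstable space (`exp(tM)v → 0` as `t → −∞`),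
where `L` is the unique symmetric positive definite matrix with `L²AL² = B`. -/
theorem stable_unstable_spaces_linear_system
    (n : ℕ) (A B L : Matrix (Fin n) (Fin n) ℝ)
    (hA : A.PosDef) (hB : B.PosDef) (hL : L.PosDef)
    (hLAL : L * L * A * (L * L) = B) :
    let M : Matrix (Fin n ⊕ Fin n) (Fin n ⊕ Fin n) ℝ := Matrix.fromBlocks 0 B A 0
    let Eminus : Set (Fin n ⊕ Fin n → ℝ) :=
      {v | ∃ q : Fin n → ℝ, v = Sum.elim q (-((L * L)⁻¹.mulVec q))}
    let Eplus : Set (Fin n ⊕ Fin n → ℝ) :=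
      {v | ∃ q : Fin n → ℝ, v = Sum.elim q ((L * L)⁻¹.mulVec q)}
    (∀ v ∈ Eminus, M.mulVec v ∈ Eminus) ∧
    (∀ v ∈ Eplus, M.mulVec v ∈ Eplus) ∧
    (∀ v ∈ Eminus,
      Tendsto (fun t : ℝ => (NormedSpace.exp (t • M)).mulVec v) atTop (nhds 0)) ∧
    (∀ v ∈ Eplus,
      Tendsto (fun t : ℝ => (NormedSpace.exp (t • M)).mulVec v) atBot (nhds 0)) := by
  intro M Eminus Eplus
  set C : Matrix (Fin n) (Fin n) ℝ := (L * L)⁻¹ with hCdef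
  have hLL : (L * L).PosDef := by
    have h1 := posDef_conj_aux (Matrix.PosDef.one (n := Fin n) (R := ℝ)) hL
    rwa [Matrix.mul_one] at h1
  have hLLdet : IsUnit (L * L).det := (Matrix.isUnit_iff_isUnit_det _).mp hLL.isUnit
  have hLdet : IsUnit L.det := (Matrix.isUnit_iff_isUnit_det _).mp hL.isUnit
  have hCLL : C * (L * L) = 1 := Matrix.nonsing_inv_mul _ hLLdet
  have hLLC : L * L * C = 1 := Matrix.mul_nonsing_inv _ hLLdet
  have hACB : C * B * C = A := by
    rw [← hLAL]
    calc C * (L * L * A * (L * L)) * C = C * (L * L) * A * (L * L * C) := by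
          simp only [Matrix.mul_assoc]
      _ = A := by rw [hCLL, hLLC, Matrix.one_mul, Matrix.mul_one]
  have hBC : B * C = L * L * A := by
    rw [← hLAL, Matrix.mul_assoc (L * L * A) (L * L) C, hLLC, Matrix.mul_one]
  have hconjL : L * (L * A * L) * L⁻¹ = L * L * A := by
    simp only [Matrix.mul_assoc, Matrix.mul_nonsing_inv _ hLdet, Matrix.mul_one]
  set P : Matrix (Fin n) (Fin n) ℝ := L * A * L with hPdef
  have hP : P.PosDef := posDef_conj_aux hA hL
  -- invariance
  have hinv : ∀ (ε : ℝ) (q : Fin n → ℝ), (hε : ε = 1 ∨ ε = -1) →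
      M *ᵥ (Sum.elim q (ε • (C *ᵥ q)))
        = Sum.elim (ε • (B *ᵥ (C *ᵥ q))) (ε • (C *ᵥ (ε • (B *ᵥ (C *ᵥ q))))) := by
    intro ε q hε
    have hε2 : ε * ε = 1 := by rcases hε with h | h <;> simp [h]
    rw [Matrix.fromBlocks_mulVec]
    simp only [Sum.elim_comp_inl, Sum.elim_comp_inr, Matrix.zero_mulVec, zero_add, add_zero]
    refine congrArg₂ Sum.elim ?_ ?_
    · rw [Matrix.mulVec_smul]
    · rw [Matrix.mulVec_smul, smul_smul, hε2, one_smul, Matrix.mulVec_mulVec,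
        Matrix.mulVec_mulVec, hACB]
  -- the two convergence statements via a common computation
  have hKexp : ∀ (D : Matrix (Fin n) (Fin n) ℝ) (Y : Matrix (Fin n) (Fin n) ℝ),
      M * Matrix.fromRows 1 D = Matrix.fromRows 1 D * Y →
      ∀ (t : ℝ) (q : Fin n → ℝ),
      (NormedSpace.exp (t • M)) *ᵥ (Matrix.fromRows (1 : Matrix (Fin n) (Fin n) ℝ) D *ᵥ q)
        = Matrix.fromRows (1 : Matrix (Fin n) (Fin n) ℝ) D *ᵥ (NormedSpace.exp (t • Y) *ᵥ q) := by
    intro D Y hMK t q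
    have h1 : (t • M) * Matrix.fromRows 1 D = Matrix.fromRows 1 D * (t • Y) := by
      erw [Matrix.smul_mul, hMK, Matrix.mul_smul]
    rw [Matrix.mulVec_mulVec, exp_intertwine_aux _ _ _ h1, ← Matrix.mulVec_mulVec]
  have hexpY : ∀ t : ℝ, NormedSpace.exp (t • (L * L * A))
      = L * NormedSpace.exp (t • P) * L⁻¹ := by
    intro t
    have : t • (L * L * A) = L * (t • P) * L⁻¹ := by
      rw [← hconjL, Matrix.mul_smul, Matrix.smul_mul]
    rw [this, Matrix.exp_conj L _ hL.isUnit]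
  have hcont : ∀ (D : Matrix (Fin n) (Fin n) ℝ) (q : Fin n → ℝ),
      Continuous fun Z : Matrix (Fin n) (Fin n) ℝ =>
        Matrix.fromRows (1 : Matrix (Fin n) (Fin n) ℝ) D *ᵥ ((L * Z * L⁻¹) *ᵥ q) :=
    fun D q => continuous_const.matrix_mulVec
      (((continuous_const.matrix_mul continuous_id).matrix_mul continuous_const).matrix_mulVec
        continuous_const)
  refine ⟨?_, ?_, ?_, ?_⟩
  · rintro v ⟨q, rfl⟩
    refine ⟨-(B *ᵥ (C *ᵥ q)), ?_⟩
    have := hinv (-1) q (Or.inr rfl)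
    simpa using this
  · rintro v ⟨q, rfl⟩
    refine ⟨B *ᵥ (C *ᵥ q), ?_⟩
    have := hinv 1 q (Or.inl rfl)
    simpa using this
  · rintro v ⟨q, rfl⟩
    have hMK : M * Matrix.fromRows 1 (-C) = Matrix.fromRows 1 (-C) * (-(L * L * A)) := by
      erw [Matrix.fromBlocks_mul_fromRows, Matrix.fromRows_mul, Matrix.fromRows_ext_iff]
      constructor
      · simp only [Matrix.zero_mul, Matrix.mul_neg, Matrix.one_mul, zero_add, hBC]
      · simp only [Matrix.zero_mul, Matrix.mul_one, neg_zero, add_zero, Matrix.neg_mul,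
          Matrix.mul_neg, neg_neg, zero_add]
        rw [← hBC, ← Matrix.mul_assoc, hACB]
    have hKq : Matrix.fromRows (1 : Matrix (Fin n) (Fin n) ℝ) (-C) *ᵥ q
        = Sum.elim q (-(C *ᵥ q)) := by
      rw [Matrix.fromRows_mulVec, Matrix.one_mulVec, Matrix.neg_mulVec]
    have heq : ∀ t : ℝ, (NormedSpace.exp (t • M)) *ᵥ (Sum.elim q (-(C *ᵥ q)))
        = Matrix.fromRows (1 : Matrix (Fin n) (Fin n) ℝ) (-C) *ᵥ
            ((L * NormedSpace.exp ((-t) • P) * L⁻¹) *ᵥ q) := by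
      intro t
      rw [← hKq, hKexp (-C) (-(L * L * A)) hMK t q]
      congr 2
      rw [show t • -(L * L * A) = (-t) • (L * L * A) by rw [neg_smul, smul_neg], hexpY]
    refine (tendsto_congr heq).mpr ?_
    have hlim : Tendsto (fun t : ℝ => NormedSpace.exp ((-t) • P)) atTop (nhds 0) :=
      (tendsto_exp_smul_posDef_atBot P hP).comp tendsto_neg_atTop_atBot
    have hfin := ((hcont (-C) q).tendsto 0).comp hlim
    have h0 : Matrix.fromRows (1 : Matrix (Fin n) (Fin n) ℝ) (-C) *ᵥ
        ((L * (0 : Matrix (Fin n) (Fin n) ℝ) * L⁻¹) *ᵥ q) = 0 := by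
      rw [Matrix.mul_zero, Matrix.zero_mul, Matrix.zero_mulVec, Matrix.mulVec_zero]
    rw [h0] at hfin
    exact hfin
  · rintro v ⟨q, rfl⟩
    have hMK : M * Matrix.fromRows 1 C = Matrix.fromRows 1 C * (L * L * A) := by
      erw [Matrix.fromBlocks_mul_fromRows, Matrix.fromRows_mul, Matrix.fromRows_ext_iff]
      constructor
      · simp only [Matrix.zero_mul, Matrix.one_mul, zero_add, hBC]
      · simp only [Matrix.zero_mul, Matrix.mul_one, add_zero, zero_add]
        rw [← hBC, ← Matrix.mul_assoc, hACB]
    have hKq : Matrix.fromRows (1 : Matrix (Fin n) (Fin n) ℝ) C *ᵥ q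
        = Sum.elim q (C *ᵥ q) := by
      rw [Matrix.fromRows_mulVec, Matrix.one_mulVec]
    have heq : ∀ t : ℝ, (NormedSpace.exp (t • M)) *ᵥ (Sum.elim q (C *ᵥ q))
        = Matrix.fromRows (1 : Matrix (Fin n) (Fin n) ℝ) C *ᵥ
            ((L * NormedSpace.exp (t • P) * L⁻¹) *ᵥ q) := by
      intro t
      rw [← hKq, hKexp C (L * L * A) hMK t q, hexpY]
    refine (tendsto_congr heq).mpr ?_
    have hlim : Tendsto (fun t : ℝ => NormedSpace.exp (t • P)) atBot (nhds 0) :=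
      tendsto_exp_smul_posDef_atBot P hP
    have hfin := ((hcont C q).tendsto 0).comp hlim
    have h0 : Matrix.fromRows (1 : Matrix (Fin n) (Fin n) ℝ) C *ᵥ
        ((L * (0 : Matrix (Fin n) (Fin n) ℝ) * L⁻¹) *ᵥ q) = 0 := by
      rw [Matrix.mul_zero, Matrix.zero_mul, Matrix.zero_mulVec, Matrix.mulVec_zero]
    rw [h0] at hfin
    exact hfin
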